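/- arXiv:2405.10924 — 2 statements merged into one kernel-verified Lean document; each statement's English description precedes it below -/
import Mathlib

section
/- Let a (v',b,r,k',λ)-BIBD with v' > 1 be partially induced by a subset L ⊆ [v'] of size v (1 ≤ v ≤ v'), i.e., each block B is replaced by B ∩ L. Then the variance of the induced block sizes equals μ·(1 + (v−1)(k'−1)/(v'−1) − μ), where μ = v·k'/v' is the mean induced block size. In particular, the variance is independent of the choice of L. -/
/-- The variance of the induced block sizes equals μ(1 + (v−1)(k'−1)/(v'−1) − μ),
where μ = v·k'/v'. -/
theorem bibd_induced_variance (v' b r k' lam v : ℕ) (hb : 0 < b)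
    (hv' : 1 < v') (hv1 : 1 ≤ v) (hvv' : v ≤ v')
    (B : Fin b → Finset (Fin v'))
    (hk : ∀ n, (B n).card = k')
    (hr : ∀ m : Fin v', (Finset.univ.filter fun n => m ∈ B n).card = r)
    (hlam : ∀ m₁ m₂ : Fin v', m₁ ≠ m₂ →
      (Finset.univ.filter fun n => m₁ ∈ B n ∧ m₂ ∈ B n).card = lam)
    (L : Finset (Fin v')) (hL : L.card = v) :
    (1 / (b : ℚ)) * (∑ n, ((B n ∩ L).card : ℚ) ^ 2) - ((v : ℚ) * k' / v') ^ 2 =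
      ((v : ℚ) * k' / v') *
        (1 + ((v : ℚ) - 1) * ((k' : ℚ) - 1) / ((v' : ℚ) - 1) - (v : ℚ) * k' / v') := by
  classical
  have hcard : ∀ n, (B n ∩ L).card = ∑ m ∈ L, if m ∈ B n then 1 else 0 := by
    intro n
    rw [Finset.inter_comm, ← Finset.filter_mem_eq_inter, Finset.card_filter]
  -- pair counts
  have hpair : ∀ m₁ m₂ : Fin v',
      (Finset.univ.filter fun n => m₁ ∈ B n ∧ m₂ ∈ B n).card
        = if m₁ = m₂ then r else lam := by
    intro m₁ m₂
    by_cases h : m₁ = m₂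
    · subst h
      simp only [and_self, if_true]
      exact hr m₁
    · rw [if_neg h]; exact hlam m₁ m₂ h
  -- sum of squares
  have hS2 : ∑ n, (B n ∩ L).card ^ 2 = v * r + lam * (v * (v - 1)) := by
    have : ∀ n, (B n ∩ L).card ^ 2
        = ∑ m₁ ∈ L, ∑ m₂ ∈ L, if m₁ ∈ B n ∧ m₂ ∈ B n then 1 else 0 := by
      intro n
      rw [hcard n, sq, Finset.sum_mul_sum]
      apply Finset.sum_congr rfl; intro m₁ _
      apply Finset.sum_congr rfl; intro m₂ _
      by_cases h1 : m₁ ∈ B n <;> by_cases h2 : m₂ ∈ B n <;> simp [h1, h2]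
    simp only [this]
    rw [Finset.sum_comm]
    have step1 : ∀ m₁ ∈ L, (∑ n : Fin b, ∑ m₂ ∈ L, if m₁ ∈ B n ∧ m₂ ∈ B n then 1 else 0)
        = r + lam * (v - 1) := by
      intro m₁ hm₁
      rw [Finset.sum_comm]
      have inner : ∀ m₂ : Fin v', (∑ n : Fin b, if m₁ ∈ B n ∧ m₂ ∈ B n then 1 else 0)
          = if m₁ = m₂ then r else lam := by
        intro m₂
        rw [← Finset.card_filter]
        exact hpair m₁ m₂
      simp only [inner]
      rw [← Finset.add_sum_erase _ _ hm₁, if_pos rfl]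
      congr 1
      rw [Finset.sum_congr rfl (fun m₂ hm₂ => if_neg (Finset.ne_of_mem_erase hm₂).symm),
        Finset.sum_const, Finset.card_erase_of_mem hm₁, hL, smul_eq_mul, mul_comm]
    calc (∑ m₁ ∈ L, ∑ n : Fin b, ∑ m₂ ∈ L, if m₁ ∈ B n ∧ m₂ ∈ B n then 1 else 0)
        = ∑ m₁ ∈ L, (r + lam * (v - 1)) := Finset.sum_congr rfl step1
      _ = v * r + lam * (v * (v - 1)) := by
          rw [Finset.sum_const, hL, smul_eq_mul]; ring
  -- identity r * v' = b * k'
  have hI1 : r * v' = b * k' := by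
    have lhs : ∑ m : Fin v', ∑ n : Fin b, (if m ∈ B n then 1 else 0) = v' * r := by
      have : ∀ m : Fin v', (∑ n : Fin b, if m ∈ B n then 1 else 0) = r := by
        intro m; rw [← Finset.card_filter]; exact hr m
      simp [this, Finset.sum_const, Finset.card_univ]
    have rhs : ∑ n : Fin b, ∑ m : Fin v', (if m ∈ B n then 1 else 0) = b * k' := by
      have : ∀ n, (∑ m : Fin v', if m ∈ B n then 1 else 0) = k' := by
        intro n
        rw [← Finset.card_filter]
        simpa [Finset.filter_mem_eq_inter] using hk n
      simp [this, Finset.sum_const, Finset.card_univ]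
    rw [mul_comm]
    rw [← lhs, Finset.sum_comm, rhs]
  -- identity lam * (v' - 1) = r * (k' - 1)
  have hI2 : lam * (v' - 1) = r * (k' - 1) := by
    have hv'0 : 0 < v' := lt_trans Nat.zero_lt_one hv'
    set m₀ : Fin v' := ⟨0, hv'0⟩
    have lhs : ∑ m ∈ Finset.univ.erase m₀, ∑ n : Fin b,
        (if m₀ ∈ B n ∧ m ∈ B n then 1 else 0) = (v' - 1) * lam := by
      have : ∀ m ∈ Finset.univ.erase m₀,
          (∑ n : Fin b, if m₀ ∈ B n ∧ m ∈ B n then 1 else 0) = lam := by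
        intro m hm
        rw [← Finset.card_filter]
        exact hlam m₀ m (Finset.ne_of_mem_erase hm).symm
      rw [Finset.sum_congr rfl this, Finset.sum_const, smul_eq_mul,
        Finset.card_erase_of_mem (Finset.mem_univ _), Finset.card_univ, Fintype.card_fin]
    have rhs : ∑ n : Fin b, ∑ m ∈ Finset.univ.erase m₀,
        (if m₀ ∈ B n ∧ m ∈ B n then 1 else 0) = r * (k' - 1) := by
      have : ∀ n : Fin b, (∑ m ∈ Finset.univ.erase m₀, if m₀ ∈ B n ∧ m ∈ B n then 1 else 0)
          = if m₀ ∈ B n then k' - 1 else 0 := by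
        intro n
        by_cases h0 : m₀ ∈ B n
        · simp only [h0, true_and, if_true]
          rw [← Finset.card_filter]
          have : (Finset.univ.erase m₀).filter (fun m => m ∈ B n) = (B n).erase m₀ := by
            ext m
            simp [Finset.mem_erase, Finset.mem_filter, and_comm]
          rw [this, Finset.card_erase_of_mem h0, hk n]
        · simp [h0]
      rw [Finset.sum_congr rfl (fun n _ => this n)]
      rw [← Finset.sum_filter, Finset.sum_const, hr m₀, smul_eq_mul]
    rw [mul_comm, ← lhs, Finset.sum_comm, rhs]
  -- move to ℚ
  have hb0 : (b : ℚ) ≠ 0 := Nat.cast_ne_zero.mpr hb.ne'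
  have hv'0 : (v' : ℚ) ≠ 0 := Nat.cast_ne_zero.mpr (by omega)
  have hv'1 : (v' : ℚ) - 1 ≠ 0 := by
    have : (1 : ℚ) < (v' : ℚ) := by exact_mod_cast hv'
    linarith
  have hS2Q : (∑ n, ((B n ∩ L).card : ℚ) ^ 2)
      = (v : ℚ) * r + (lam : ℚ) * ((v : ℚ) * ((v : ℚ) - 1)) := by
    have := congrArg (fun x : ℕ => (x : ℚ)) hS2
    push_cast [Nat.cast_sub hv1] at this
    convert this using 2
  have hI1Q : (r : ℚ) * v' = (b : ℚ) * k' := by exact_mod_cast hI1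
  have hI2Q : (lam : ℚ) * ((v' : ℚ) - 1) = (r : ℚ) * ((k' : ℚ) - 1) := by
    have h1 : 1 ≤ v' := le_of_lt hv'
    by_cases hk1 : 1 ≤ k'
    · have := congrArg (fun x : ℕ => (x : ℚ)) hI2
      push_cast [Nat.cast_sub h1, Nat.cast_sub hk1] at this
      exact this
    · have hk0 : k' = 0 := by omega
      have hrv : r * v' = 0 := by rw [hI1, hk0, mul_zero]
      have hr0 : r = 0 := by
        rcases Nat.mul_eq_zero.mp hrv with h | h
        · exact h
        · omega
      have hlv : lam * (v' - 1) = 0 := by rw [hI2, hr0, zero_mul]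
      have hlam0 : lam = 0 := by
        rcases Nat.mul_eq_zero.mp hlv with h | h
        · exact h
        · omega
      simp [hr0, hlam0, hk0]
  rw [hS2Q]
  have hrQ : (r : ℚ) = (b : ℚ) * k' / v' := by
    field_simp
    linarith [hI1Q]
  have hlamQ : (lam : ℚ) = (r : ℚ) * ((k' : ℚ) - 1) / ((v' : ℚ) - 1) := by
    field_simp
    linarith [hI2Q]
  rw [hlamQ, hrQ]
  field_simp
end

section
/- Let N : [0,1]^v → ℝ^c be a classifier, x an input, and t ≤ k ≤ v. Suppose C is a family of k-subsets of [v] covering every t-subset of [v], and N is robust on I_B(x) for every B ∈ C. Then N is robust on the L₀ t-ball B_t(x) = { x' ∈ [0,1]^v : |{ i : x'_i ≠ x_i }| ≤ t }. -/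
/-- The argmax of a classifier output. -/
noncomputable def Argmax {c : ℕ} [NeZero c] (y : Fin c → ℝ) : Fin c :=
  (Finset.exists_max_image Finset.univ y Finset.univ_nonempty).choose

/-- If a covering design's blocks all yield robust interval neighborhoods, the
classifier is robust on the L₀ t-ball. -/
theorem covering_implies_L0_robust (v c t k : ℕ) [NeZero c]
    (htk : t ≤ k) (hkv : k ≤ v)
    (N : (Fin v → ℝ) → Fin c → ℝ) (x : Fin v → ℝ)
    (hx : ∀ i, x i ∈ Set.Icc (0 : ℝ) 1)
    (C : Finset (Finset (Fin v)))
    (hC : ∀ B ∈ C, B.card = k)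
    (hcov : ∀ S : Finset (Fin v), S.card = t → ∃ B ∈ C, S ⊆ B)
    (hrob : ∀ B ∈ C, ∀ x' : Fin v → ℝ, (∀ i, x' i ∈ Set.Icc (0 : ℝ) 1) →
      (∀ i ∉ B, x' i = x i) → Argmax (N x') = Argmax (N x)) :
    ∀ x' : Fin v → ℝ, (∀ i, x' i ∈ Set.Icc (0 : ℝ) 1) →
      (Finset.univ.filter fun i => x' i ≠ x i).card ≤ t →
      Argmax (N x') = Argmax (N x) := by
  intro x' hx' hcard
  obtain ⟨S, hsub, hScard⟩ := Finset.exists_superset_card_eq hcard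
    (by simpa [Fintype.card_fin] using htk.trans hkv)
  obtain ⟨B, hB, hSB⟩ := hcov S hScard
  refine hrob B hB x' hx' fun i hiB => ?_
  by_contra h
  exact hiB (hSB (hsub (by simp [h])))
end
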